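/- Let a, z : ℕ → ℕ be non-decreasing with k·(a 1 + z 1) = a k + z k for all k, let d : BodyTypes → ℕ be a finitely supported assignment of coefficients, and define G := F_{a,z} + Σ_β d(β)·F_β on mope nets, where F_{a,z}(X → S ← Y, P) = (a_{|S|} − a_{|X|}) + (z_{|S|} − z_{|Y|}) and F_β counts transitions of body type β. Then G is an additive invariant: G(identity) = 0 and G(M ∘ M') = G(M) + G(M') for composable mope nets M, M'. -/

import Mathlib

/-- An open Petri net: a cospan of finite sets `X → S ← Y` decorated by a
Petri net with (finite) species set `S` and (finite) transition set `T`;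
`src τ` and `tgt τ` are the input and output multisets of the transition `τ`. -/
structure OpenPetri (X Y : Type) where
  S : Type
  finS : Finite S
  i : X → S
  o : Y → S
  T : Type
  finT : Finite T
  src : T → S → ℕ
  tgt : T → S → ℕ

namespace OpenPetri

/-- The transitionless open Petri net on a cospan `X → S ← Y`. -/
def trNet {X Y : Type} (S : Type) (hS : Finite S) (i : X → S) (o : Y → S) :
    OpenPetri X Y :=
  ⟨S, hS, i, o, PEmpty, inferInstance, fun t => t.elim, fun t => t.elim⟩

/-- The identity open Petri net on a finite set `S`. -/
def idNet (S : Type) (hS : Finite S) : OpenPetri S S := trNet S hS id id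

/-- The relation generating the pushout of `S ← Y → S'`. -/
def pushoutRel {Y S S' : Type} (o : Y → S) (i' : Y → S') :
    (S ⊕ S') → (S ⊕ S') → Prop :=
  fun a b => ∃ y, a = Sum.inl (o y) ∧ b = Sum.inr (i' y)

/-- Composition of open Petri nets: pushout of the underlying cospans,
disjoint union of transitions, and source/target multisets pushed forward
along the pushout maps. -/
noncomputable def comp {X Y Z : Type} (P : OpenPetri X Y) (Q : OpenPetri Y Z) :
    OpenPetri X Z where
  S := Quot (pushoutRel P.o Q.i)
  finS := by have := P.finS; have := Q.finS; exact Quot.finite _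
  i := fun x => Quot.mk _ (Sum.inl (P.i x))
  o := fun z => Quot.mk _ (Sum.inr (Q.o z))
  T := P.T ⊕ Q.T
  finT := by have := P.finT; have := Q.finT; infer_instance
  src := fun τ σ' =>
    match τ with
    | Sum.inl τ => ∑ᶠ (σ : P.S) (_ : Quot.mk (pushoutRel P.o Q.i) (Sum.inl σ) = σ'), P.src τ σ
    | Sum.inr τ => ∑ᶠ (σ : Q.S) (_ : Quot.mk (pushoutRel P.o Q.i) (Sum.inr σ) = σ'), Q.src τ σ
  tgt := fun τ σ' =>
    match τ with
    | Sum.inl τ => ∑ᶠ (σ : P.S) (_ : Quot.mk (pushoutRel P.o Q.i) (Sum.inl σ) = σ'), P.tgt τ σ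
    | Sum.inr τ => ∑ᶠ (σ : Q.S) (_ : Quot.mk (pushoutRel P.o Q.i) (Sum.inr σ) = σ'), Q.tgt τ σ

/-- Tensor (disjoint union) of open Petri nets. -/
def tensor {X Y X' Y' : Type} (P : OpenPetri X Y) (Q : OpenPetri X' Y') :
    OpenPetri (X ⊕ X') (Y ⊕ Y') where
  S := P.S ⊕ Q.S
  finS := by have := P.finS; have := Q.finS; infer_instance
  i := Sum.map P.i Q.i
  o := Sum.map P.o Q.o
  T := P.T ⊕ Q.T
  finT := by have := P.finT; have := Q.finT; infer_instance
  src := fun τ σ =>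
    match τ, σ with
    | Sum.inl τ, Sum.inl σ => P.src τ σ
    | Sum.inr τ, Sum.inr σ => Q.src τ σ
    | _, _ => 0
  tgt := fun τ σ =>
    match τ, σ with
    | Sum.inl τ, Sum.inl σ => P.tgt τ σ
    | Sum.inr τ, Sum.inr σ => Q.tgt τ σ
    | _, _ => 0

/-- Isomorphism of open Petri nets with the same feet: bijections of species
and transitions commuting with the legs and the source/target maps. -/
structure Iso {X Y : Type} (P Q : OpenPetri X Y) where
  eS : P.S ≃ Q.S
  eT : P.T ≃ Q.T
  hi : ∀ x, eS (P.i x) = Q.i x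
  ho : ∀ y, eS (P.o y) = Q.o y
  hsrc : ∀ τ σ, Q.src (eT τ) (eS σ) = P.src τ σ
  htgt : ∀ τ σ, Q.tgt (eT τ) (eS σ) = P.tgt τ σ

/-- A monically open ("mope") Petri net: both legs are injective. -/
def Monic {X Y : Type} (P : OpenPetri X Y) : Prop :=
  Function.Injective P.i ∧ Function.Injective P.o

end OpenPetri

namespace OpenPetri

/-- The body type of a transition: the multiset of pairs
`(s(τ)(σ), t(τ)(σ))` over the species `σ` participating in `τ`. -/
noncomputable def bodyType {X Y : Type} (P : OpenPetri X Y) (τ : P.T) :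
    Multiset (ℕ × ℕ) :=
  haveI := P.finS
  haveI := Fintype.ofFinite P.S
  Multiset.filter (fun p => p ≠ (0, 0))
    (Finset.univ.val.map fun σ => (P.src τ σ, P.tgt τ σ))

/-- `F_β`: the number of transitions of body type `β`. -/
noncomputable def Fbt (β : Multiset (ℕ × ℕ)) {X Y : Type} (P : OpenPetri X Y) : ℕ :=
  Nat.card {τ : P.T // bodyType P τ = β}

/-- `F_{a,z}`: the boundary invariant
`(a_{|S|} − a_{|X|}) + (z_{|S|} − z_{|Y|})` (truncated subtraction). -/
noncomputable def Faz (a z : ℕ → ℕ) {X Y : Type} (P : OpenPetri X Y) : ℕ :=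
  (a (Nat.card P.S) - a (Nat.card X)) + (z (Nat.card P.S) - z (Nat.card Y))

/-- The combined invariant `G = F_{a,z} + Σ_β d(β)·F_β`. -/
noncomputable def Gfun (a z : ℕ → ℕ) (d : Multiset (ℕ × ℕ) →₀ ℕ)
    {X Y : Type} (P : OpenPetri X Y) : ℕ :=
  Faz a z P + d.sum fun β c => c * Fbt β P

end OpenPetri


section ScratchAux

lemma finsum_cond_apply {A B : Type} (g : A → B) (hg : Function.Injective g)
    (v : A → ℕ) (a : A) :
    (∑ᶠ (x : A) (_ : g x = g a), v x) = v a := by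
  classical
  have h1 : ∀ x : A, (∑ᶠ _ : g x = g a, v x) = if g x = g a then v x else 0 :=
    fun x => finsum_eq_if
  rw [finsum_congr h1, finsum_eq_single _ a (fun x hx => if_neg (fun h => hx (hg h)))]
  simp

lemma finsum_cond_not_range {A B : Type} (g : A → B) (v : A → ℕ) (b : B)
    (hb : b ∉ Set.range g) :
    (∑ᶠ (x : A) (_ : g x = b), v x) = 0 := by
  classical
  have h1 : ∀ x : A, (∑ᶠ _ : g x = b, v x) = 0 := by
    intro x
    rw [finsum_eq_if, if_neg (fun h => hb ⟨x, h⟩)]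
  rw [finsum_congr h1, finsum_zero]

lemma filter_map_univ {A B : Type} [Fintype A] [Fintype B] (f : A → B)
    (hf : Function.Injective f) (G : B → ℕ × ℕ)
    (h0 : ∀ b, b ∉ Set.range f → G b = (0, 0)) :
    Multiset.filter (fun p => p ≠ (0, 0)) (Finset.univ.val.map G)
      = Multiset.filter (fun p => p ≠ (0, 0))
          ((Finset.univ.val : Multiset A).map fun a => G (f a)) := by
  classical
  rw [Multiset.filter_map, Multiset.filter_map]
  have h1 : Finset.filter (fun b => G b ≠ (0, 0)) Finset.univ
      = Finset.image f (Finset.filter (fun a => G (f a) ≠ (0, 0)) Finset.univ) := by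
    ext b
    simp only [Finset.mem_filter, Finset.mem_univ, true_and, Finset.mem_image]
    constructor
    · intro hb
      have hr : b ∈ Set.range f := by
        by_contra h; exact hb (h0 b h)
      obtain ⟨a, rfl⟩ := hr
      exact ⟨a, hb, rfl⟩
    · rintro ⟨a, ha, rfl⟩; exact ha
  have h2 := congrArg Finset.val h1
  rw [Finset.filter_val, Finset.image_val, Finset.filter_val] at h2
  have h3 : (Multiset.map f (Multiset.filter (fun a => G (f a) ≠ (0,0)) Finset.univ.val)).dedup
      = Multiset.map f (Multiset.filter (fun a => G (f a) ≠ (0,0)) Finset.univ.val) :=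
    Multiset.dedup_eq_self.mpr ((Multiset.Nodup.filter _ Finset.univ.nodup).map hf)
  rw [h3] at h2
  show Multiset.map G (Multiset.filter (fun b => G b ≠ (0,0)) Finset.univ.val) = _
  rw [h2, Multiset.map_map]
  rfl

end ScratchAux

section PushAux
open OpenPetri
open scoped Classical

variable {Y S S' : Type}

noncomputable def pushFunP (o : Y → S) (i' : Y → S') : S ⊕ S' → (S ⊕ {s : S' // s ∉ Set.range i'}) :=
  Sum.elim (fun s => Sum.inl s)
    (fun s' => if h : s' ∈ Set.range i' then Sum.inl (o h.choose) else Sum.inr ⟨s', h⟩)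

lemma pushFun_inl (o : Y → S) (i' : Y → S') (s : S) :
    pushFunP o i' (Sum.inl s) = Sum.inl s := rfl

lemma pushFun_inr_mem (o : Y → S) (i' : Y → S') {s' : S'} (h : s' ∈ Set.range i') :
    pushFunP o i' (Sum.inr s') = Sum.inl (o h.choose) := by
  simp only [pushFunP, Sum.elim_inr]; exact dif_pos h

lemma pushFun_inr_not (o : Y → S) (i' : Y → S') {s' : S'} (h : s' ∉ Set.range i') :
    pushFunP o i' (Sum.inr s') = Sum.inr ⟨s', h⟩ := by
  simp only [pushFunP, Sum.elim_inr]; exact dif_neg h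

lemma pushFun_sound (o : Y → S) (i' : Y → S') (hi : Function.Injective i')
    {x y : S ⊕ S'} (h : pushoutRel o i' x y) : pushFunP o i' x = pushFunP o i' y := by
  obtain ⟨w, rfl, rfl⟩ := h
  have hm : i' w ∈ Set.range i' := ⟨w, rfl⟩
  rw [pushFun_inl, pushFun_inr_mem o i' hm]
  exact congrArg (Sum.inl ∘ o) (hi hm.choose_spec).symm

noncomputable def pushEquiv (o : Y → S) (i' : Y → S') (hi : Function.Injective i') :
    Quot (pushoutRel o i') ≃ (S ⊕ {s : S' // s ∉ Set.range i'}) where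
  toFun := Quot.lift (pushFunP o i') (fun _ _ h => pushFun_sound o i' hi h)
  invFun := Sum.elim (fun s => Quot.mk _ (Sum.inl s)) (fun s => Quot.mk _ (Sum.inr s.1))
  left_inv := by
    apply Quot.ind
    rintro (s | s')
    · rfl
    · by_cases h : s' ∈ Set.range i'
      · show Sum.elim _ _ (pushFunP o i' (Sum.inr s')) = _
        rw [pushFun_inr_mem o i' h]
        exact Quot.sound ⟨h.choose, rfl, by rw [h.choose_spec]⟩
      · show Sum.elim _ _ (pushFunP o i' (Sum.inr s')) = _
        rw [pushFun_inr_not o i' h]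
        rfl
  right_inv := by
    rintro (s | ⟨s', h⟩)
    · rfl
    · show pushFunP o i' (Sum.inr s') = _
      rw [pushFun_inr_not o i' h]

lemma pushEquiv_mk_inl (o : Y → S) (i' : Y → S') (hi : Function.Injective i') (s : S) :
    pushEquiv o i' hi (Quot.mk _ (Sum.inl s)) = Sum.inl s := rfl

lemma pushEquiv_mk_inr (o : Y → S) (i' : Y → S') (hi : Function.Injective i') (s' : S') :
    pushEquiv o i' hi (Quot.mk _ (Sum.inr s')) = pushFunP o i' (Sum.inr s') := rfl

lemma push_inl_injective (o : Y → S) (i' : Y → S') (hi : Function.Injective i') :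
    Function.Injective (fun s => Quot.mk (pushoutRel o i') (Sum.inl s)) := by
  intro s₁ s₂ h
  have h2 := congrArg (pushEquiv o i' hi) h
  rw [pushEquiv_mk_inl, pushEquiv_mk_inl] at h2
  exact Sum.inl.inj h2

lemma push_inr_injective (o : Y → S) (i' : Y → S') (ho : Function.Injective o)
    (hi : Function.Injective i') :
    Function.Injective (fun s => Quot.mk (pushoutRel o i') (Sum.inr s)) := by
  intro s₁ s₂ h
  have h2 := congrArg (pushEquiv o i' hi) h
  rw [pushEquiv_mk_inr, pushEquiv_mk_inr] at h2
  by_cases h1 : s₁ ∈ Set.range i' <;> by_cases hb : s₂ ∈ Set.range i'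
  · rw [pushFun_inr_mem o i' h1, pushFun_inr_mem o i' hb] at h2
    have := ho (Sum.inl.inj h2)
    rw [← h1.choose_spec, ← hb.choose_spec, this]
  · rw [pushFun_inr_mem o i' h1, pushFun_inr_not o i' hb] at h2
    exact absurd h2 (by simp)
  · rw [pushFun_inr_not o i' h1, pushFun_inr_mem o i' hb] at h2
    exact absurd h2 (by simp)
  · rw [pushFun_inr_not o i' h1, pushFun_inr_not o i' hb] at h2
    exact congrArg Subtype.val (Sum.inr.inj h2)

lemma push_inl_not_inr (o : Y → S) (i' : Y → S') (hi : Function.Injective i')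
    {s' : S'} (h : s' ∉ Set.range i') (s : S) :
    Quot.mk (pushoutRel o i') (Sum.inl s) ≠ Quot.mk (pushoutRel o i') (Sum.inr s') := by
  intro hc
  have h2 := congrArg (pushEquiv o i' hi) hc
  rw [pushEquiv_mk_inl, pushEquiv_mk_inr, pushFun_inr_not o i' h] at h2
  exact absurd h2 (by simp)

end PushAux

section MainAux
open OpenPetri

lemma bodyType_def {X Y : Type} (P : OpenPetri X Y) (τ : P.T) [inst : Fintype P.S] :
    bodyType P τ = Multiset.filter (fun p => p ≠ (0, 0))
      ((Finset.univ.val : Multiset P.S).map fun σ => (P.src τ σ, P.tgt τ σ)) := by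
  unfold bodyType
  rw [Subsingleton.elim (Fintype.ofFinite P.S) inst]

lemma bodyType_comp_inl {X Y Z : Type} (P : OpenPetri X Y) (Q : OpenPetri Y Z)
    (hQ : Function.Injective Q.i) (τ : P.T) :
    bodyType (P.comp Q) (Sum.inl τ) = bodyType P τ := by
  have hPS := P.finS; have hQS := Q.finS
  have hCS := (P.comp Q).finS
  letI : Fintype (P.comp Q).S := Fintype.ofFinite _
  letI : Fintype P.S := Fintype.ofFinite _
  rw [bodyType_def]
  refine (bodyType_def (P.comp Q) (Sum.inl τ)).trans ?_
  have hf : Function.Injective (fun s : P.S => Quot.mk (pushoutRel P.o Q.i) (Sum.inl s)) :=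
    push_inl_injective P.o Q.i hQ
  have h0 : ∀ b, b ∉ Set.range (fun s : P.S => Quot.mk (pushoutRel P.o Q.i) (Sum.inl s)) →
      ((P.comp Q).src (Sum.inl τ) b, (P.comp Q).tgt (Sum.inl τ) b) = (0, 0) := by
    intro b hb
    have h1 : (P.comp Q).src (Sum.inl τ) b = 0 :=
      finsum_cond_not_range (fun s : P.S => Quot.mk (pushoutRel P.o Q.i) (Sum.inl s))
        (P.src τ) b hb
    have h2 : (P.comp Q).tgt (Sum.inl τ) b = 0 :=
      finsum_cond_not_range (fun s : P.S => Quot.mk (pushoutRel P.o Q.i) (Sum.inl s))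
        (P.tgt τ) b hb
    rw [h1, h2]
  rw [filter_map_univ (B := (P.comp Q).S) (fun s : P.S => Quot.mk (pushoutRel P.o Q.i) (Sum.inl s)) hf
    (fun b => ((P.comp Q).src (Sum.inl τ) b, (P.comp Q).tgt (Sum.inl τ) b)) h0]
  refine congrArg _ (Multiset.map_congr rfl ?_)
  intro σ _
  have h1 : (P.comp Q).src (Sum.inl τ) (Quot.mk (pushoutRel P.o Q.i) (Sum.inl σ)) = P.src τ σ :=
    finsum_cond_apply (fun s : P.S => Quot.mk (pushoutRel P.o Q.i) (Sum.inl s)) hf (P.src τ) σ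
  have h2 : (P.comp Q).tgt (Sum.inl τ) (Quot.mk (pushoutRel P.o Q.i) (Sum.inl σ)) = P.tgt τ σ :=
    finsum_cond_apply (fun s : P.S => Quot.mk (pushoutRel P.o Q.i) (Sum.inl s)) hf (P.tgt τ) σ
  rw [h1, h2]

lemma bodyType_comp_inr {X Y Z : Type} (P : OpenPetri X Y) (Q : OpenPetri Y Z)
    (hPo : Function.Injective P.o) (hQ : Function.Injective Q.i) (τ : Q.T) :
    bodyType (P.comp Q) (Sum.inr τ) = bodyType Q τ := by
  have hPS := P.finS; have hQS := Q.finS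
  have hCS := (P.comp Q).finS
  letI : Fintype (P.comp Q).S := Fintype.ofFinite _
  letI : Fintype Q.S := Fintype.ofFinite _
  rw [bodyType_def]
  refine (bodyType_def (P.comp Q) (Sum.inr τ)).trans ?_
  have hf : Function.Injective (fun s : Q.S => Quot.mk (pushoutRel P.o Q.i) (Sum.inr s)) :=
    push_inr_injective P.o Q.i hPo hQ
  have h0 : ∀ b, b ∉ Set.range (fun s : Q.S => Quot.mk (pushoutRel P.o Q.i) (Sum.inr s)) →
      ((P.comp Q).src (Sum.inr τ) b, (P.comp Q).tgt (Sum.inr τ) b) = (0, 0) := by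
    intro b hb
    have h1 : (P.comp Q).src (Sum.inr τ) b = 0 :=
      finsum_cond_not_range (fun s : Q.S => Quot.mk (pushoutRel P.o Q.i) (Sum.inr s))
        (Q.src τ) b hb
    have h2 : (P.comp Q).tgt (Sum.inr τ) b = 0 :=
      finsum_cond_not_range (fun s : Q.S => Quot.mk (pushoutRel P.o Q.i) (Sum.inr s))
        (Q.tgt τ) b hb
    rw [h1, h2]
  rw [filter_map_univ (B := (P.comp Q).S) (fun s : Q.S => Quot.mk (pushoutRel P.o Q.i) (Sum.inr s)) hf
    (fun b => ((P.comp Q).src (Sum.inr τ) b, (P.comp Q).tgt (Sum.inr τ) b)) h0]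
  refine congrArg _ (Multiset.map_congr rfl ?_)
  intro σ _
  have h1 : (P.comp Q).src (Sum.inr τ) (Quot.mk (pushoutRel P.o Q.i) (Sum.inr σ)) = Q.src τ σ :=
    finsum_cond_apply (fun s : Q.S => Quot.mk (pushoutRel P.o Q.i) (Sum.inr s)) hf (Q.src τ) σ
  have h2 : (P.comp Q).tgt (Sum.inr τ) (Quot.mk (pushoutRel P.o Q.i) (Sum.inr σ)) = Q.tgt τ σ :=
    finsum_cond_apply (fun s : Q.S => Quot.mk (pushoutRel P.o Q.i) (Sum.inr s)) hf (Q.tgt τ) σ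
  rw [h1, h2]

lemma Fbt_comp (β : Multiset (ℕ × ℕ)) {X Y Z : Type} (P : OpenPetri X Y) (Q : OpenPetri Y Z)
    (hP : P.Monic) (hQ : Q.Monic) :
    Fbt β (P.comp Q) = Fbt β P + Fbt β Q := by
  have hPT := P.finT; have hQT := Q.finT
  unfold Fbt
  have e : {τ : (P.comp Q).T // bodyType (P.comp Q) τ = β}
      ≃ ({τ : P.T // bodyType (P.comp Q) (Sum.inl τ) = β}
          ⊕ {τ : Q.T // bodyType (P.comp Q) (Sum.inr τ) = β}) := Equiv.subtypeSum
  rw [Nat.card_congr e, Nat.card_sum]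
  congr 1
  · exact Nat.card_congr (Equiv.subtypeEquivRight
      (fun τ => by rw [bodyType_comp_inl P Q hQ.1 τ]))
  · exact Nat.card_congr (Equiv.subtypeEquivRight
      (fun τ => by rw [bodyType_comp_inr P Q hP.2 hQ.1 τ]))

lemma card_comp {X Y Z : Type} [Finite Y] (P : OpenPetri X Y) (Q : OpenPetri Y Z)
    (hQ : Function.Injective Q.i) :
    Nat.card (P.comp Q).S + Nat.card Y = Nat.card P.S + Nat.card Q.S := by
  classical
  have hPS := P.finS; have hQS := Q.finS
  have h1 : Nat.card (P.comp Q).S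
      = Nat.card P.S + Nat.card {s : Q.S // s ∉ Set.range Q.i} := by
    have e : (P.comp Q).S ≃ (P.S ⊕ {s : Q.S // s ∉ Set.range Q.i}) := pushEquiv P.o Q.i hQ
    rw [Nat.card_congr e, Nat.card_sum]
  have e3 : {s : Q.S // s ∉ Set.range Q.i} ≃ (↥(Set.range Q.i)ᶜ) :=
    Equiv.subtypeEquivRight (fun x => Iff.rfl)
  have h2 : Nat.card (Set.range Q.i) + Nat.card {s : Q.S // s ∉ Set.range Q.i}
      = Nat.card Q.S := by
    rw [← Nat.card_sum]
    exact Nat.card_congr ((Equiv.sumCongr (Equiv.refl _) e3).trans (Equiv.Set.sumCompl _))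
  have h3 : Nat.card (Set.range Q.i) = Nat.card Y :=
    Nat.card_congr (Equiv.ofInjective _ hQ).symm
  omega

end MainAux

open OpenPetri in
/-- For non-decreasing `a, z : ℕ → ℕ` with `k·(a 1 + z 1) = a k + z k` and a
finitely supported assignment of coefficients `d`, the invariant
`G = F_{a,z} + Σ_β d(β)·F_β` is an additive invariant of mope nets:
it vanishes on identities and is additive under composition. -/
theorem stmt_16 (a z : ℕ → ℕ) (ha : Monotone a) (hz : Monotone z)
    (hcond : ∀ k : ℕ, k * (a 1 + z 1) = a k + z k)
    (d : Multiset (ℕ × ℕ) →₀ ℕ) :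
    (∀ (S : Type) (hS : Finite S), Gfun a z d (idNet S hS) = 0) ∧
    (∀ {X Y Z : Type} [Finite X] [Finite Y] [Finite Z]
      (P : OpenPetri X Y) (Q : OpenPetri Y Z), P.Monic → Q.Monic →
      Gfun a z d (P.comp Q) = Gfun a z d P + Gfun a z d Q) := by
  constructor
  · intro S hS
    have hFbt : ∀ β, Fbt β (idNet S hS) = 0 := by
      intro β
      unfold Fbt
      have : IsEmpty {τ : (idNet S hS).T // bodyType (idNet S hS) τ = β} := by
        constructor; rintro ⟨τ, -⟩; exact τ.elim
      exact Nat.card_of_isEmpty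
    have hFaz : Faz a z (idNet S hS) = 0 := by
      show (a (Nat.card S) - a (Nat.card S)) + (z (Nat.card S) - z (Nat.card S)) = 0
      omega
    unfold Gfun
    rw [hFaz]
    simp [Finsupp.sum, hFbt]
  · intro X Y Z _ _ _ P Q hP hQ
    have hPS := P.finS; have hQS := Q.finS
    have hFbt : ∀ β, Fbt β (P.comp Q) = Fbt β P + Fbt β Q :=
      fun β => Fbt_comp β P Q hP hQ
    have hc := card_comp P Q hQ.1
    -- abbreviations
    have hxm : Nat.card X ≤ Nat.card P.S := Nat.card_le_card_of_injective P.i hP.1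
    have hym : Nat.card Y ≤ Nat.card P.S := Nat.card_le_card_of_injective P.o hP.2
    have hyn : Nat.card Y ≤ Nat.card Q.S := Nat.card_le_card_of_injective Q.i hQ.1
    have hwn : Nat.card Z ≤ Nat.card Q.S := Nat.card_le_card_of_injective Q.o hQ.2
    have hmK : Nat.card P.S ≤ Nat.card (P.comp Q).S := by omega
    have hnK : Nat.card Q.S ≤ Nat.card (P.comp Q).S := by omega
    have E : (Nat.card (P.comp Q).S + Nat.card Y) * (a 1 + z 1)
        = (Nat.card P.S + Nat.card Q.S) * (a 1 + z 1) := by rw [hc]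
    rw [add_mul, add_mul, hcond (Nat.card (P.comp Q).S), hcond (Nat.card Y),
      hcond (Nat.card P.S), hcond (Nat.card Q.S)] at E
    have ha1 : a (Nat.card X) ≤ a (Nat.card P.S) := ha hxm
    have ha2 : a (Nat.card Y) ≤ a (Nat.card Q.S) := ha hyn
    have ha3 : a (Nat.card P.S) ≤ a (Nat.card (P.comp Q).S) := ha hmK
    have ha4 : a (Nat.card Q.S) ≤ a (Nat.card (P.comp Q).S) := ha hnK
    have hz1 : z (Nat.card Y) ≤ z (Nat.card P.S) := hz hym
    have hz2 : z (Nat.card Z) ≤ z (Nat.card Q.S) := hz hwn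
    have hz3 : z (Nat.card P.S) ≤ z (Nat.card (P.comp Q).S) := hz hmK
    have hz4 : z (Nat.card Q.S) ≤ z (Nat.card (P.comp Q).S) := hz hnK
    have hFaz : Faz a z (P.comp Q) = Faz a z P + Faz a z Q := by
      unfold Faz
      omega
    have hsum : (d.sum fun β c => c * Fbt β (P.comp Q))
        = (d.sum fun β c => c * Fbt β P) + (d.sum fun β c => c * Fbt β Q) := by
      rw [Finsupp.sum, Finsupp.sum, Finsupp.sum, ← Finset.sum_add_distrib]
      exact Finset.sum_congr rfl (fun β _ => by rw [hFbt β, Nat.mul_add])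
    unfold Gfun
    rw [hFaz, hsum]
    omega
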